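/- (Corollary 1.) Define α̂₀ : ℝ → ℝ by α̂₀(ρ) = Φ(ρ)·(1 − ρ·Φ(−ρ)/φ(ρ)). Then the derivative of α̂₀ at ρ = 0 equals (√(2/π) − √(π/2))/2, which is a negative absolute constant (approximately −0.2277) independent of all parameters of the model. -/

import Mathlib

open MeasureTheory ProbabilityTheory

/-- The standard normal density φ(t) = (2π)^{-1/2} e^{-t²/2}. -/
noncomputable def stdNormalPDF (t : ℝ) : ℝ :=
  (Real.sqrt (2 * Real.pi))⁻¹ * Real.exp (-t ^ 2 / 2)

/-- The standard normal distribution function Φ(x) = ∫_{-∞}^x φ(t) dt. -/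
noncomputable def stdNormalCDF (x : ℝ) : ℝ :=
  ∫ t in Set.Iic x, stdNormalPDF t

/-- The estimate α̂₀ of the optimal acceptance threshold as a function of the
adjusted mean ρ of the environment. -/
noncomputable def optThreshold (ρ : ℝ) : ℝ :=
  stdNormalCDF ρ * (1 - ρ * stdNormalCDF (-ρ) / stdNormalPDF ρ)

lemma stdNormalPDF_continuous : Continuous stdNormalPDF := by
  unfold stdNormalPDF; fun_prop

lemma stdNormalPDF_integrable : Integrable stdNormalPDF := by
  have h : Integrable fun t : ℝ => Real.exp (-(1/2) * t ^ 2) :=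
    integrable_exp_neg_mul_sq (by norm_num)
  have := (h.const_mul (Real.sqrt (2 * Real.pi))⁻¹)
  refine this.congr ?_
  filter_upwards with t
  unfold stdNormalPDF
  ring_nf

lemma stdNormalPDF_pos (t : ℝ) : 0 < stdNormalPDF t := by
  unfold stdNormalPDF
  positivity

lemma hasDerivAt_stdNormalCDF (a : ℝ) :
    HasDerivAt stdNormalCDF (stdNormalPDF a) a := by
  have hi := stdNormalPDF_integrable
  have hc := stdNormalPDF_continuous
  have key : ∀ x : ℝ, stdNormalCDF x
      = stdNormalCDF 0 + ∫ t in (0:ℝ)..x, stdNormalPDF t := by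
    intro x
    rw [← intervalIntegral.integral_Iic_sub_Iic hi.integrableOn hi.integrableOn]
    unfold stdNormalCDF
    ring
  have h := intervalIntegral.integral_hasDerivAt_right
    (hc.intervalIntegrable 0 a)
    (hc.aestronglyMeasurable.stronglyMeasurableAtFilter) hc.continuousAt
  have h2 := (h.const_add (stdNormalCDF 0))
  exact h2.congr_of_eventuallyEq (Filter.Eventually.of_forall fun x => key x)

lemma stdNormalPDF_zero : stdNormalPDF 0 = (Real.sqrt (2 * Real.pi))⁻¹ := by
  simp [stdNormalPDF]

lemma stdNormalCDF_zero : stdNormalCDF 0 = 1 / 2 := by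
  have htot : ∫ t : ℝ, stdNormalPDF t = 1 := by
    unfold stdNormalPDF
    rw [MeasureTheory.integral_const_mul]
    have : ∀ t : ℝ, Real.exp (-t ^ 2 / 2) = Real.exp (-(1/2) * t ^ 2) := by
      intro t; ring_nf
    simp_rw [this, integral_gaussian]
    rw [show Real.pi / (1/2) = 2 * Real.pi by ring]
    rw [inv_mul_cancel₀ (Real.sqrt_ne_zero'.mpr (by positivity))]
  have hsym : ∫ t in Set.Iic (0:ℝ), stdNormalPDF t
      = ∫ t in Set.Ioi (0:ℝ), stdNormalPDF t := by
    have h1 := integral_comp_neg_Iic (0:ℝ) stdNormalPDF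
    have heven : ∀ t : ℝ, stdNormalPDF (-t) = stdNormalPDF t := by
      intro t; unfold stdNormalPDF; ring_nf
    simp_rw [heven, neg_zero] at h1
    exact h1
  have hsplit := intervalIntegral.integral_Iic_add_Ioi (b := (0:ℝ))
    stdNormalPDF_integrable.integrableOn stdNormalPDF_integrable.integrableOn
  unfold stdNormalCDF
  rw [← hsplit] at htot
  rw [← hsym] at htot
  linarith

/-- Corollary 1: the derivative of the estimated optimal acceptance threshold
at ρ = 0 equals (√(2/π) − √(π/2))/2, a negative absolute constant. -/
theorem deriv_optThreshold_at_zero :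
    deriv optThreshold 0 = (Real.sqrt (2 / Real.pi) - Real.sqrt (Real.pi / 2)) / 2 ∧
      (Real.sqrt (2 / Real.pi) - Real.sqrt (Real.pi / 2)) / 2 < 0 := by
  have hpi := Real.pi_pos
  set c : ℝ := stdNormalPDF 0 with hc
  have hcval : c = (Real.sqrt (2 * Real.pi))⁻¹ := stdNormalPDF_zero
  have hcpos : 0 < c := stdNormalPDF_pos 0
  -- derivative of pdf at 0 is 0
  have hpdf0 : HasDerivAt stdNormalPDF 0 0 := by
    have hinner : HasDerivAt (fun t : ℝ => -t ^ 2 / 2) 0 0 := by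
      have : HasDerivAt (fun t : ℝ => -t ^ 2 / 2) (-(2 * 0 ^ (2-1)) / 2) 0 := by
        exact (((hasDerivAt_pow 2 (0:ℝ)).neg).div_const 2)
      simpa using this
    have := hinner.exp.const_mul (Real.sqrt (2 * Real.pi))⁻¹
    simp only [mul_zero] at this
    exact this
  have hΦ : HasDerivAt stdNormalCDF c 0 := hasDerivAt_stdNormalCDF 0
  have hΦneg : HasDerivAt (fun ρ : ℝ => stdNormalCDF (-ρ)) (-c) 0 := by
    have hΦ' : HasDerivAt stdNormalCDF c (-(0:ℝ)) := by simpa using hΦ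
    have h := hΦ'.comp 0 (hasDerivAt_neg (0:ℝ))
    simpa [mul_comm, Function.comp_def] using h
  -- numerator n ρ = ρ * Φ(-ρ)
  have hn : HasDerivAt (fun ρ : ℝ => ρ * stdNormalCDF (-ρ)) (1/2) 0 := by
    have := (hasDerivAt_id (0:ℝ)).mul hΦneg
    simpa [stdNormalCDF_zero, Pi.mul_def] using this
  have hq : HasDerivAt (fun ρ : ℝ => ρ * stdNormalCDF (-ρ) / stdNormalPDF ρ)
      ((1/2) / c) 0 := by
    have h := hn.div hpdf0 (stdNormalPDF_pos 0).ne'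
    refine HasDerivAt.congr_deriv h ?_
    rw [← hc]
    field_simp
    ring
  have hmain : HasDerivAt optThreshold (c * 1 + (1/2) * (-((1/2)/c))) 0 := by
    have hin : HasDerivAt (fun ρ : ℝ => 1 - ρ * stdNormalCDF (-ρ) / stdNormalPDF ρ)
        (-((1/2)/c)) 0 := (hq.const_sub 1)
    have := hΦ.mul hin
    unfold optThreshold
    refine HasDerivAt.congr_deriv this ?_
    simp [stdNormalCDF_zero]
  have hval : c * 1 + (1/2) * (-((1/2)/c))
      = (Real.sqrt (2 / Real.pi) - Real.sqrt (Real.pi / 2)) / 2 := by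
    have h2 : Real.sqrt 2 * Real.sqrt 2 = 2 := Real.mul_self_sqrt (by norm_num)
    have hp : Real.sqrt Real.pi * Real.sqrt Real.pi = Real.pi :=
      Real.mul_self_sqrt hpi.le
    have h2pos : (0:ℝ) < Real.sqrt 2 := by positivity
    have hppos : (0:ℝ) < Real.sqrt Real.pi := Real.sqrt_pos.mpr hpi
    have e1 : Real.sqrt (2 * Real.pi) = Real.sqrt 2 * Real.sqrt Real.pi :=
      Real.sqrt_mul (by norm_num) _
    have e2 : Real.sqrt (2 / Real.pi) = Real.sqrt 2 / Real.sqrt Real.pi :=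
      Real.sqrt_div (by norm_num) _
    have e3 : Real.sqrt (Real.pi / 2) = Real.sqrt Real.pi / Real.sqrt 2 :=
      Real.sqrt_div hpi.le _
    rw [hcval, e1, e2, e3]
    field_simp
    ring_nf
    linear_combination (-2 - Real.sqrt Real.pi ^ 2)*h2
  have hneg : (Real.sqrt (2 / Real.pi) - Real.sqrt (Real.pi / 2)) / 2 < 0 := by
    have : Real.sqrt (2 / Real.pi) < Real.sqrt (Real.pi / 2) := by
      apply Real.sqrt_lt_sqrt (by positivity)
      rw [div_lt_div_iff₀ hpi (by norm_num)]
      nlinarith [Real.pi_gt_three]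
    linarith
  exact ⟨by rw [hmain.deriv, hval], hneg⟩
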